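/- Let X be a Banach space with the diametral strong diameter two property (DSD2P). Then X is a space with bad projections: every rank-one bounded linear projection P : X → X (i.e. P ∘ P = P and the range of P is one-dimensional) satisfies ‖Id − P‖ ≥ 2. -/

import Mathlib

open Set

/-- The ballSlice `S(f, α)` of the closed unit ball of `X` determined by a functional `f`
and `α > 0`: the set of points `x` of the closed unit ball with `Re (f x) > 1 - α`. -/
def ballSlice {𝕜 : Type*} [RCLike 𝕜] {X : Type*} [NormedAddCommGroup X] [NormedSpace 𝕜 X]
    (f : X →L[𝕜] 𝕜) (α : ℝ) : Set X :=
  {x : X | ‖x‖ ≤ 1 ∧ 1 - α < RCLike.re (f x)}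

/-- `C` is a convex combination of slices of the closed unit ball of `X`:
`C = λ₁ S₁ + ⋯ + λₙ Sₙ` where `n ≥ 1`, each `Sᵢ = S(fᵢ, αᵢ)` is a ballSlice (with `‖fᵢ‖ = 1`,
`αᵢ > 0`), each `λᵢ > 0` and `∑ λᵢ = 1`. -/
def IsConvexCombOfSlices {𝕜 : Type*} [RCLike 𝕜] (X : Type*) [NormedAddCommGroup X]
    [NormedSpace 𝕜 X] (C : Set X) : Prop :=
  ∃ (n : ℕ), 0 < n ∧ ∃ (f : Fin n → (X →L[𝕜] 𝕜)) (α lam : Fin n → ℝ),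
    (∀ i, ‖f i‖ = 1) ∧ (∀ i, 0 < α i) ∧ (∀ i, 0 < lam i) ∧ (∑ i, lam i) = 1 ∧
    C = {x : X | ∃ y : Fin n → X, (∀ i, y i ∈ ballSlice (f i) (α i)) ∧
      x = ∑ i, (lam i : 𝕜) • y i}

/-- `X` has the diametral strong diameter two property (DSD2P): for every convex
combination of slices `C` of the closed unit ball, every `δ > 0` and every `x ∈ C`,
there is `y ∈ C` with `‖x - y‖ > 1 + ‖x‖ - δ`. -/
def DSD2P (𝕜 : Type*) [RCLike 𝕜] (X : Type*) [NormedAddCommGroup X]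
    [NormedSpace 𝕜 X] : Prop :=
  ∀ C : Set X, IsConvexCombOfSlices (𝕜 := 𝕜) X C →
    ∀ δ > (0 : ℝ), ∀ x ∈ C, ∃ y ∈ C, ‖x - y‖ > 1 + ‖x‖ - δ

set_option maxHeartbeats 2000000

/-- If a Banach space `X` has the DSD2P, then `X` is a space with bad projections:
every rank-one bounded linear projection `P : X → X` satisfies `‖Id - P‖ ≥ 2`. -/
theorem dsd2p_implies_bad_projections {𝕜 : Type*} [RCLike 𝕜] {X : Type*}
    [NormedAddCommGroup X] [NormedSpace 𝕜 X] [CompleteSpace X]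
    (h : DSD2P 𝕜 X) (P : X →L[𝕜] X) (hP : P.comp P = P)
    (hrank : Module.finrank 𝕜 (LinearMap.range (P : X →ₗ[𝕜] X)) = 1) :
    2 ≤ ‖ContinuousLinearMap.id 𝕜 X - P‖ := by
  classical
  rw [finrank_eq_one_iff'] at hrank
  obtain ⟨v, hv0, hv⟩ := hrank
  have hvX : (v : X) ≠ 0 := fun h0 => hv0 (Subtype.ext h0)
  set nv : ℝ := ‖(v : X)‖ with hnv
  have hnv0 : nv ≠ 0 := norm_ne_zero_iff.mpr hvX
  set u : X := ((nv⁻¹ : ℝ) : 𝕜) • (v : X) with hu_def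
  have hu1 : ‖u‖ = 1 := by
    rw [hu_def, norm_smul, RCLike.norm_ofReal, abs_of_nonneg (inv_nonneg.mpr (norm_nonneg _))]
    field_simp
  have hu0 : u ≠ 0 := by
    intro h0; rw [h0, norm_zero] at hu1; norm_num at hu1
  have hvu : (v : X) = ((nv : ℝ) : 𝕜) • u := by
    rw [hu_def, smul_smul, ← RCLike.ofReal_mul, mul_inv_cancel₀ hnv0]
    simp
  have hu_mem : u ∈ LinearMap.range (P : X →ₗ[𝕜] X) := by
    exact Submodule.smul_mem _ _ v.2
  have hPfix : ∀ w ∈ LinearMap.range (P : X →ₗ[𝕜] X), P w = w := by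
    rintro w ⟨z, rfl⟩
    have := DFunLike.congr_fun hP z
    simpa using this
  have hPu : P u = u := hPfix u hu_mem
  obtain ⟨f, hf1, hfu⟩ := exists_dual_vector 𝕜 u (norm_ne_zero_iff.mpr hu0)
  rw [hu1] at hfu
  have hfu1 : f u = 1 := by rw [hfu]; simp
  set xs : X →L[𝕜] 𝕜 := f.comp P with hxs_def
  have hP_eq : ∀ z : X, P z = (xs z) • u := by
    intro z
    have hz : P z ∈ LinearMap.range (P : X →ₗ[𝕜] X) := ⟨z, rfl⟩
    obtain ⟨c, hc⟩ := hv ⟨P z, hz⟩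
    have hc' : c • (v : X) = P z := congrArg Subtype.val hc
    have hPz : P z = (c * nv) • u := by
      rw [← hc', hvu, smul_smul]
    have hxsz : xs z = c * nv := by
      rw [hxs_def]
      simp only [ContinuousLinearMap.comp_apply]
      rw [hPz, map_smul, hfu1, smul_eq_mul, mul_one]
    rw [hxsz, hPz]
  have hxsu : xs u = 1 := by
    rw [hxs_def]; simp only [ContinuousLinearMap.comp_apply]; rw [hPu, hfu1]
  set t : ℝ := ‖xs‖ with ht_def
  have ht1 : 1 ≤ t := by
    have := xs.le_opNorm u
    rw [hxsu, hu1, mul_one] at this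
    simpa using this
  have ht0 : 0 < t := lt_of_lt_of_le one_pos ht1
  clear_value t
  clear_value xs
  clear_value u
  clear_value nv
  -- main quantitative estimate
  have H : ∀ e : ℝ, e ∈ Set.Ioo (0:ℝ) 1 →
      2 - (3*e + t * Real.sqrt (2*e)) ≤ ‖ContinuousLinearMap.id 𝕜 X - P‖ := by
    rintro e ⟨he0, he1⟩
    set f1 : X →L[𝕜] 𝕜 := ((t⁻¹ : ℝ) : 𝕜) • xs with hf1_def
    have hf1norm : ‖f1‖ = 1 := by
      have hns : ‖f1‖ = ‖((t⁻¹ : ℝ) : 𝕜)‖ * ‖xs‖ := by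
        rw [hf1_def]; exact norm_smul (((t)⁻¹ : ℝ) : 𝕜) xs
      rw [hns, RCLike.norm_ofReal, abs_of_nonneg (inv_nonneg.mpr ht0.le), ← ht_def]
      exact inv_mul_cancel₀ ht0.ne'
    set α : ℝ := 1 - (1-e) * t⁻¹ with hα_def
    have hα_eq : 1 - α = (1-e) * t⁻¹ := by rw [hα_def]; ring
    have hti : (0:ℝ) < t⁻¹ := inv_pos.mpr ht0
    have hα0 : 0 < α := by
      have h1 : (1-e) * t⁻¹ ≤ (1-e) * 1 := by
        apply mul_le_mul_of_nonneg_left _ (by linarith)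
        rw [inv_le_one_iff₀]; right; exact ht1
      have hti' : (0:ℝ) < t⁻¹ := inv_pos.mpr ht0
      rw [hα_def]; nlinarith
    have hre_f1 : ∀ z : X, RCLike.re (f1 z) = t⁻¹ * RCLike.re (xs z) := by
      intro z
      have hz : f1 z = ((t⁻¹ : ℝ) : 𝕜) * xs z := rfl
      rw [hz]
      exact RCLike.re_ofReal_mul _ _
    clear_value α
    clear hα_def
    set C : Set X := {x : X | ∃ y : Fin 1 → X,
        (∀ i, y i ∈ ballSlice ((fun _ : Fin 1 => f1) i) ((fun _ : Fin 1 => α) i)) ∧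
        x = ∑ i, (((fun _ : Fin 1 => (1:ℝ)) i : ℝ) : 𝕜) • y i} with hC_def
    have hC : IsConvexCombOfSlices (𝕜 := 𝕜) X C :=
      ⟨1, one_pos, fun _ => f1, fun _ => α, fun _ => 1,
        fun _ => hf1norm, fun _ => hα0, fun _ => one_pos, by simp, rfl⟩
    have hmemC : ∀ x : X, x ∈ C ↔ x ∈ ballSlice f1 α := by
      intro x
      constructor
      · rintro ⟨y, hy, rfl⟩
        simpa using hy 0
      · intro hx
        exact ⟨fun _ => x, fun _ => hx, by simp⟩
    clear_value C
    have huC : u ∈ C := by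
      rw [hmemC]
      refine ⟨le_of_eq hu1, ?_⟩
      rw [hre_f1, hxsu, hα_eq]
      simp only [RCLike.one_re, mul_one]
      nlinarith
    obtain ⟨y, hyC, hxy⟩ := h C hC e he0 u huC
    rw [hu1] at hxy
    have hxy' : 2 - e < ‖u - y‖ := by linarith
    rw [hmemC] at hyC
    obtain ⟨hy1, hy2⟩ := hyC
    have hrey : 1 - e < RCLike.re (xs y) := by
      rw [hre_f1] at hy2
      rw [hα_eq] at hy2
      have := (mul_lt_mul_iff_right₀ hti).mp (by rw [mul_comm (1-e) t⁻¹] at hy2; exact hy2)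
      exact this
    have hne : u - y ≠ 0 := by
      intro h0
      rw [h0, norm_zero] at hxy'
      linarith
    obtain ⟨g, hg1, hgu⟩ := exists_dual_vector 𝕜 (u - y) (norm_ne_zero_iff.mpr hne)
    -- basic bounds
    have hgy_norm : ‖g y‖ ≤ 1 := by
      calc ‖g y‖ ≤ ‖g‖ * ‖y‖ := g.le_opNorm y
        _ ≤ 1 := by rw [hg1]; simpa using hy1
    have hgu_norm : ‖g u‖ ≤ 1 := by
      calc ‖g u‖ ≤ ‖g‖ * ‖u‖ := g.le_opNorm u
        _ = 1 := by rw [hg1, hu1, one_mul]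
    have hsub : RCLike.re (g u) - RCLike.re (g y) = ‖u - y‖ := by
      have := congrArg RCLike.re hgu
      rw [map_sub] at this
      simpa using this
    have hrgy_lb : -1 ≤ RCLike.re (g y) := by
      have := RCLike.abs_re_le_norm (g y)
      have := abs_le.mp (le_trans this hgy_norm)
      linarith [this.1]
    have hrgu_ub : RCLike.re (g u) ≤ 1 := by
      have := RCLike.abs_re_le_norm (g u)
      have := abs_le.mp (le_trans this hgu_norm)
      exact this.2
    have hrgu_lb : 1 - e ≤ RCLike.re (g u) := by linarith
    have hrgy_ub : RCLike.re (g y) ≤ e - 1 := by linarith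
    have him_gu : |RCLike.im (g u)| ≤ Real.sqrt (2*e) := by
      apply Real.abs_le_sqrt
      have hns : ‖g u‖ ^ 2 = RCLike.re (g u) * RCLike.re (g u)
          + RCLike.im (g u) * RCLike.im (g u) := RCLike.norm_sq_eq_def
      nlinarith [hgu_norm, hrgu_lb, hrgu_ub, norm_nonneg (g u)]
    have him_xy : |RCLike.im (xs y)| ≤ t := by
      calc |RCLike.im (xs y)| ≤ ‖xs y‖ := RCLike.abs_im_le_norm _
        _ ≤ ‖xs‖ * ‖y‖ := xs.le_opNorm y
        _ = t * ‖y‖ := by rw [← ht_def]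
        _ ≤ t := mul_le_of_le_one_right ht0.le hy1
    -- the test vector
    have hw : (ContinuousLinearMap.id 𝕜 X - P) (-y) = (xs y) • u - y := by
      simp only [ContinuousLinearMap.sub_apply, ContinuousLinearMap.id_apply, map_neg,
        hP_eq y]
      abel
    have hkey1 : RCLike.re (g ((xs y) • u - y)) ≤ ‖ContinuousLinearMap.id 𝕜 X - P‖ := by
      have h1 : RCLike.re (g ((xs y) • u - y)) ≤ ‖g ((xs y) • u - y)‖ :=
        RCLike.re_le_norm _
      have h2 : ‖g ((xs y) • u - y)‖ ≤ ‖(xs y) • u - y‖ := by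
        calc ‖g ((xs y) • u - y)‖ ≤ ‖g‖ * ‖(xs y) • u - y‖ := g.le_opNorm _
          _ = ‖(xs y) • u - y‖ := by rw [hg1, one_mul]
      have h3 : ‖(xs y) • u - y‖ ≤ ‖ContinuousLinearMap.id 𝕜 X - P‖ := by
        rw [← hw]
        calc ‖(ContinuousLinearMap.id 𝕜 X - P) (-y)‖
            ≤ ‖ContinuousLinearMap.id 𝕜 X - P‖ * ‖-y‖ :=
              (ContinuousLinearMap.id 𝕜 X - P).le_opNorm _
          _ ≤ ‖ContinuousLinearMap.id 𝕜 X - P‖ * 1 := by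
              apply mul_le_mul_of_nonneg_left _ (norm_nonneg _)
              rw [norm_neg]; exact hy1
          _ = _ := mul_one _
      linarith
    have hkey2 : 2 - (3*e + t * Real.sqrt (2*e)) ≤ RCLike.re (g ((xs y) • u - y)) := by
      have hg_expand : g ((xs y) • u - y) = (xs y) * (g u) - g y := by
        rw [map_sub, map_smul, smul_eq_mul]
      rw [hg_expand, map_sub, RCLike.mul_re]
      have hprod : (1-e)*(1-e) ≤ RCLike.re (xs y) * RCLike.re (g u) := by
        apply mul_le_mul hrey.le hrgu_lb (by linarith) (by linarith)
      have himprod : RCLike.im (xs y) * RCLike.im (g u) ≤ t * Real.sqrt (2*e) := by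
        calc RCLike.im (xs y) * RCLike.im (g u)
            ≤ |RCLike.im (xs y) * RCLike.im (g u)| := le_abs_self _
          _ = |RCLike.im (xs y)| * |RCLike.im (g u)| := abs_mul _ _
          _ ≤ t * Real.sqrt (2*e) := by
              apply mul_le_mul him_xy him_gu (abs_nonneg _) ht0.le
      nlinarith [Real.sqrt_nonneg (2*e)]
    linarith
  -- limit argument
  have tend : Filter.Tendsto (fun e : ℝ => 2 - (3*e + t * Real.sqrt (2*e)))
      (nhdsWithin 0 (Set.Ioi 0)) (nhds 2) := by
    have hcont : Continuous fun e : ℝ => 2 - (3*e + t * Real.sqrt (2*e)) :=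
      continuous_const.sub ((continuous_const.mul continuous_id).add
        (continuous_const.mul (Real.continuous_sqrt.comp (continuous_const.mul continuous_id))))
    have h0 : (fun e : ℝ => 2 - (3*e + t * Real.sqrt (2*e))) 0 = 2 := by
      simp
    have h2 : Filter.Tendsto (fun e : ℝ => 2 - (3*e + t * Real.sqrt (2*e)))
        (nhdsWithin 0 (Set.Ioi 0))
        (nhds ((fun e : ℝ => 2 - (3*e + t * Real.sqrt (2*e))) 0)) :=
      (hcont.tendsto 0).mono_left nhdsWithin_le_nhds
    rw [h0] at h2
    exact h2
  exact le_of_tendsto tend (Filter.eventually_of_mem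
    (Ioo_mem_nhdsGT_of_mem ⟨le_refl 0, one_pos⟩) H)
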